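/- Let x ∈ ℝ^n, let S ⊆ {1,…,n} with |S| = k ≤ n − k, and let a ≥ 0. Enumerate S as i_1, …, i_k with x_{i_1} ≤ … ≤ x_{i_k} and the k largest-valued elements outside S as j_1, …, j_k with x_{j_1} ≥ … ≥ x_{j_k}. Let L = { l ∈ {1,…,k} : x_{j_l} − x_{i_l} > a }; then L is a down-set (if l ∈ L and l' < l then l' ∈ L), and the set T_a = (S \ {i_l : l ∈ L}) ∪ {j_l : l ∈ L} maximizes the α-stable objective Σ_{i∈S'} x_i − a·|S'\S| over all k-element subsets S' of {1,…,n}. Consequently the tradeoff is monotone: as a decreases, the set of performed swaps only grows, so each item enters or exits the α-stable top-k at most once as a is swept. -/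

import Mathlib

lemma fin_le_apply' {t k : ℕ} {f : Fin t → Fin k} (hf : StrictMono f) (m : Fin t) :
    (m : ℕ) ≤ (f m : ℕ) := by
  have H : ∀ s : ℕ, ∀ m : Fin t, m.val = s → s ≤ (f m : ℕ) := by
    intro s
    induction s with
    | zero => intro m _; omega
    | succ s ih =>
      intro m hm
      have hs : s < t := by omega
      have h1 : (⟨s, hs⟩ : Fin t) < m := by simp [Fin.lt_def, hm]
      have h2 := hf h1
      have h3 := ih ⟨s, hs⟩ rfl
      rw [Fin.lt_def] at h2
      omega
  exact H m.val m rfl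

lemma prefix_sum_antitone' {k : ℕ} (g : Fin k → ℝ) (hg : Antitone g)
    (B : Finset (Fin k)) {t : ℕ} (hB : B.card = t) (ht : t ≤ k) :
    ∑ l ∈ B, g l ≤ ∑ m : Fin t, g (Fin.castLE ht m) := by
  have h1 : ∑ l ∈ B, g l = ∑ m : Fin t, g (B.orderEmbOfFin hB m) := by
    rw [← Finset.sum_image (g := fun m => B.orderEmbOfFin hB m)
      (fun x _ y _ h => (B.orderEmbOfFin hB).injective h)]
    congr 1
    apply Finset.ext
    intro l
    rw [Finset.mem_image]
    constructor
    · intro hl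
      have hr := Finset.range_orderEmbOfFin B hB
      have hl2 : l ∈ Set.range fun m => B.orderEmbOfFin hB m := by
        rw [hr]; exact_mod_cast hl
      obtain ⟨m, hm⟩ := hl2
      exact ⟨m, Finset.mem_univ m, hm⟩
    · rintro ⟨m, _, rfl⟩
      exact Finset.orderEmbOfFin_mem B hB m
  rw [h1]
  apply Finset.sum_le_sum
  intro m _
  apply hg
  rw [Fin.le_def]
  exact fin_le_apply' (B.orderEmbOfFin hB).strictMono m

lemma prefix_sum_monotone' {k : ℕ} (g : Fin k → ℝ) (hg : Monotone g)
    (B : Finset (Fin k)) {t : ℕ} (hB : B.card = t) (ht : t ≤ k) :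
    ∑ m : Fin t, g (Fin.castLE ht m) ≤ ∑ l ∈ B, g l := by
  have := prefix_sum_antitone' (fun l => -g l) (fun p q hpq => by simp [hg hpq]) B hB ht
  simp only [Finset.sum_neg_distrib] at this
  linarith

lemma top_sum_bound {n k : ℕ} (x : Fin n → ℝ) (S : Finset (Fin n)) (j : Fin k → Fin n)
    (hj_inj : Function.Injective j)
    (hj_anti : Antitone fun l => x (j l))
    (hj_top : ∀ m, m ∉ S → (∀ l, j l ≠ m) → ∀ l, x m ≤ x (j l))
    (A : Finset (Fin n)) (hA : ∀ m ∈ A, m ∉ S) {t : ℕ} (hAc : A.card = t) (ht : t ≤ k) :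
    ∑ m ∈ A, x m ≤ ∑ m : Fin t, x (j (Fin.castLE ht m)) := by
  classical
  set K : Finset (Fin k) := Finset.univ.filter (fun l => j l ∈ A) with hK
  set A1 : Finset (Fin n) := A.filter (fun m => ∃ l, j l = m) with hA1
  set A2 : Finset (Fin n) := A.filter (fun m => ¬ ∃ l, j l = m) with hA2
  have hA1K : A1 = K.image j := by
    apply Finset.ext
    intro m
    simp only [hA1, hK, Finset.mem_filter, Finset.mem_image, Finset.mem_univ, true_and]
    constructor
    · rintro ⟨hm, l, rfl⟩; exact ⟨l, hm, rfl⟩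
    · rintro ⟨l, h1, rfl⟩; exact ⟨h1, l, rfl⟩
  have hKA1 : K.card = A1.card := by
    rw [hA1K, Finset.card_image_of_injective K hj_inj]
  have hcards : A1.card + A2.card = t := by
    rw [hA1, hA2, Finset.card_filter_add_card_filter_not, hAc]
  have hKle : K.card ≤ t := by omega
  obtain ⟨K', hK'sub, hK'card⟩ := Finset.exists_subset_card_eq
    (show t - K.card ≤ (Finset.univ \ K).card by
      rw [Finset.card_sdiff_of_subset (Finset.subset_univ K), Finset.card_univ, Fintype.card_fin]
      omega)
  have hdisj : Disjoint K K' :=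
    (Finset.disjoint_of_subset_left hK'sub Finset.sdiff_disjoint).symm
  have hcardU : (K ∪ K').card = t := by
    rw [Finset.card_union_of_disjoint hdisj, hK'card]; omega
  have hsum1 : ∑ m ∈ A1, x m = ∑ l ∈ K, x (j l) := by
    rw [hA1K, Finset.sum_image (fun a _ b _ h => hj_inj h)]
  have hsum2 : ∑ m ∈ A2, x m ≤ ∑ l ∈ K', x (j l) := by
    have hA2c : A2.card = K'.card := by omega
    have e := Finset.equivOfCardEq hA2c
    rw [← Finset.sum_coe_sort A2 (fun m => x m),
        ← Finset.sum_coe_sort K' (fun l => x (j l)),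
        ← Equiv.sum_comp e (fun i : {l // l ∈ K'} => x (j i.1))]
    apply Finset.sum_le_sum
    intro m _
    have hm2 := Finset.mem_filter.mp m.2
    exact hj_top m.1 (hA m.1 hm2.1) (fun l hl => hm2.2 ⟨l, hl⟩) _
  have hsplit : ∑ m ∈ A1, x m + ∑ m ∈ A2, x m = ∑ m ∈ A, x m := by
    rw [hA1, hA2, Finset.sum_filter_add_sum_filter_not]
  have hunion : ∑ l ∈ K, x (j l) + ∑ l ∈ K', x (j l) = ∑ l ∈ K ∪ K', x (j l) :=
    (Finset.sum_union hdisj).symm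
  have hpref := prefix_sum_antitone' (fun l => x (j l)) hj_anti (K ∪ K') hcardU ht
  linarith

/-- **The α-stable top-k optimum performs exactly the swaps with gain exceeding `a`,
and the tradeoff is monotone.**
Let `|S| = k ≤ n - k`, with `i` enumerating `S` in nondecreasing order of value and `j`
enumerating the `k` largest-valued elements of the complement in nonincreasing order.
Let `L = {l : x (j l) - x (i l) > a}`.  Then `L` is a down-set, and
`T = (S \ i(L)) ∪ j(L)` is a `k`-element set maximizing
`∑_{m∈S'} x m - a * |S' \ S|` over all `k`-element subsets `S'`. -/
theorem alpha_stable_top_k (n k : ℕ) (x : Fin n → ℝ) (S : Finset (Fin n))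
    (hS : S.card = k) (hk : k ≤ n - k) (a : ℝ) (ha : 0 ≤ a)
    (i j : Fin k → Fin n)
    (hi_inj : Function.Injective i) (hi_mem : ∀ l, i l ∈ S)
    (hi_mono : Monotone fun l => x (i l))
    (hj_inj : Function.Injective j) (hj_mem : ∀ l, j l ∉ S)
    (hj_anti : Antitone fun l => x (j l))
    (hj_top : ∀ m, m ∉ S → (∀ l, j l ≠ m) → ∀ l, x m ≤ x (j l)) :
    let L : Finset (Fin k) := Finset.univ.filter fun l => a < x (j l) - x (i l)
    let T : Finset (Fin n) := (S \ L.image i) ∪ L.image j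
    (∀ l ∈ L, ∀ l' : Fin k, l' < l → l' ∈ L) ∧
    T.card = k ∧
    ∀ S' : Finset (Fin n), S'.card = k →
      ∑ m ∈ S', x m - a * ((S' \ S).card : ℝ) ≤
        ∑ m ∈ T, x m - a * ((T \ S).card : ℝ) := by
  intro L T
  classical
  -- basic facts
  have hiS : L.image i ⊆ S := by
    intro m hm
    obtain ⟨l, _, rfl⟩ := Finset.mem_image.mp hm
    exact hi_mem l
  have hLcard : L.card ≤ k := by
    calc L.card ≤ (Finset.univ : Finset (Fin k)).card := Finset.card_filter_le _ _
    _ = k := by rw [Finset.card_univ, Fintype.card_fin]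
  have hiLcard : (L.image i).card = L.card := Finset.card_image_of_injective L hi_inj
  have hjLcard : (L.image j).card = L.card := Finset.card_image_of_injective L hj_inj
  have hdisj : Disjoint (S \ L.image i) (L.image j) := by
    rw [Finset.disjoint_right]
    intro m hm hm2
    obtain ⟨l, _, rfl⟩ := Finset.mem_image.mp hm
    exact hj_mem l (Finset.mem_sdiff.mp hm2).1
  have hTcard : T.card = k := by
    show ((S \ L.image i) ∪ L.image j).card = k
    rw [Finset.card_union_of_disjoint hdisj, Finset.card_sdiff_of_subset hiS, hS, hiLcard, hjLcard]
    omega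
  have hTS : T \ S = L.image j := by
    apply Finset.ext
    intro m
    rw [Finset.mem_sdiff, Finset.mem_union, Finset.mem_sdiff]
    constructor
    · rintro ⟨h1 | h1, h2⟩
      · exact absurd h1.1 h2
      · exact h1
    · intro h1
      obtain ⟨l, _, rfl⟩ := Finset.mem_image.mp h1
      exact ⟨Or.inr h1, hj_mem l⟩
  have hsumT : ∑ m ∈ T, x m
      = ∑ m ∈ S, x m + ∑ l ∈ L, x (j l) - ∑ l ∈ L, x (i l) := by
    show ∑ m ∈ (S \ L.image i) ∪ L.image j, x m = _
    rw [Finset.sum_union hdisj]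
    have h1 : ∑ m ∈ S \ L.image i, x m + ∑ m ∈ L.image i, x m = ∑ m ∈ S, x m :=
      Finset.sum_sdiff hiS
    rw [Finset.sum_image (fun p _ q _ h => hi_inj h)] at h1
    rw [Finset.sum_image (fun p _ q _ h => hj_inj h)]
    linarith
  refine ⟨?_, hTcard, ?_⟩
  · -- downset
    intro l hl l' hl'
    have hl2 := (Finset.mem_filter.mp hl).2
    have h1 : x (j l) ≤ x (j l') := hj_anti hl'.le
    have h2 : x (i l') ≤ x (i l) := hi_mono hl'.le
    exact Finset.mem_filter.mpr ⟨Finset.mem_univ _, by linarith⟩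
  · -- optimality
    intro S' hS'
    set t := (S' \ S).card with htdef
    have ht : t ≤ k := by
      rw [htdef, ← hS']
      exact Finset.card_le_card Finset.sdiff_subset
    -- |S \ S'| = t
    have hc1 := Finset.card_sdiff_add_card_inter S S'
    have hc2 := Finset.card_sdiff_add_card_inter S' S
    have hinterc : (S ∩ S').card = (S' ∩ S).card := by rw [Finset.inter_comm]
    have htS : (S \ S').card = t := by omega
    -- i is a bijection onto S
    have hiuniv : Finset.univ.image i = S := by
      apply Finset.eq_of_subset_of_card_le
      · intro m hm
        obtain ⟨l, _, rfl⟩ := Finset.mem_image.mp hm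
        exact hi_mem l
      · rw [Finset.card_image_of_injective _ hi_inj, Finset.card_univ, Fintype.card_fin, hS]
    -- S \ S' as the image of a set of indices
    set B : Finset (Fin k) := Finset.univ.filter (fun l => i l ∉ S') with hB
    have himg : S \ S' = B.image i := by
      apply Finset.ext
      intro m
      rw [Finset.mem_sdiff, Finset.mem_image]
      constructor
      · rintro ⟨h1, h2⟩
        rw [← hiuniv] at h1
        obtain ⟨l, _, rfl⟩ := Finset.mem_image.mp h1
        exact ⟨l, Finset.mem_filter.mpr ⟨Finset.mem_univ _, h2⟩, rfl⟩
      · rintro ⟨l, hl, rfl⟩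
        exact ⟨hi_mem l, (Finset.mem_filter.mp hl).2⟩
    have hBcard : B.card = t := by
      have := Finset.card_image_of_injective B hi_inj
      rw [← himg] at this
      omega
    -- lower bound on removed mass
    have hlow : ∑ m : Fin t, x (i (Fin.castLE ht m)) ≤ ∑ m ∈ S \ S', x m := by
      rw [himg, Finset.sum_image (fun p _ q _ h => hi_inj h)]
      exact prefix_sum_monotone' (fun l => x (i l)) hi_mono B hBcard ht
    -- upper bound on added mass
    have hup : ∑ m ∈ S' \ S, x m ≤ ∑ m : Fin t, x (j (Fin.castLE ht m)) :=
      top_sum_bound x S j hj_inj hj_anti hj_top (S' \ S)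
        (fun m hm => (Finset.mem_sdiff.mp hm).2) rfl ht
    -- prefix gains ≤ gains over L
    have hP : ∑ m : Fin t, (x (j (Fin.castLE ht m)) - x (i (Fin.castLE ht m)) - a)
        ≤ ∑ l ∈ L, (x (j l) - x (i l) - a) := by
      set g : Fin k → ℝ := fun l => x (j l) - x (i l) - a with hg
      have hcast : ∑ m : Fin t, g (Fin.castLE ht m)
          = ∑ l ∈ Finset.univ.image (Fin.castLE ht), g l := by
        rw [Finset.sum_image (fun p _ q _ h => Fin.castLE_injective ht h)]
      set P : Finset (Fin k) := Finset.univ.image (Fin.castLE ht) with hPdef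
      have hsplitP : ∑ l ∈ P.filter (fun l => l ∈ L), g l
          + ∑ l ∈ P.filter (fun l => l ∉ L), g l = ∑ l ∈ P, g l :=
        Finset.sum_filter_add_sum_filter_not P _ g
      have hneg : ∑ l ∈ P.filter (fun l => l ∉ L), g l ≤ 0 := by
        apply Finset.sum_nonpos
        intro l hl
        have h2 := (Finset.mem_filter.mp hl).2
        have h3 : ¬ a < x (j l) - x (i l) := by
          intro hcon
          exact h2 (Finset.mem_filter.mpr ⟨Finset.mem_univ _, hcon⟩)
        rw [hg]
        simp only
        linarith [not_lt.mp h3]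
      have hpos : ∑ l ∈ P.filter (fun l => l ∈ L), g l ≤ ∑ l ∈ L, g l := by
        apply Finset.sum_le_sum_of_subset_of_nonneg
        · intro l hl
          exact (Finset.mem_filter.mp hl).2
        · intro l hl _
          have := (Finset.mem_filter.mp hl).2
          rw [hg]
          simp only
          linarith
      calc ∑ m : Fin t, g (Fin.castLE ht m) = ∑ l ∈ P, g l := hcast
        _ ≤ ∑ l ∈ L, g l := by linarith
    -- expand both sides of hP
    have hPexp : ∑ m : Fin t, (x (j (Fin.castLE ht m)) - x (i (Fin.castLE ht m)) - a)
        = ∑ m : Fin t, x (j (Fin.castLE ht m)) - ∑ m : Fin t, x (i (Fin.castLE ht m))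
          - t * a := by
      rw [Finset.sum_sub_distrib, Finset.sum_sub_distrib, Finset.sum_const,
        Finset.card_univ, Fintype.card_fin, nsmul_eq_mul]
    have hLexp : ∑ l ∈ L, (x (j l) - x (i l) - a)
        = ∑ l ∈ L, x (j l) - ∑ l ∈ L, x (i l) - L.card * a := by
      rw [Finset.sum_sub_distrib, Finset.sum_sub_distrib, Finset.sum_const, nsmul_eq_mul]
    -- sum decompositions
    have hd1 : ∑ m ∈ S' \ S, x m + ∑ m ∈ S' ∩ S, x m = ∑ m ∈ S', x m := by
      have := Finset.sum_sdiff (f := x) (Finset.inter_subset_left (s₁ := S') (s₂ := S))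
      rwa [Finset.sdiff_inter_self_left] at this
    have hd2 : ∑ m ∈ S \ S', x m + ∑ m ∈ S ∩ S', x m = ∑ m ∈ S, x m := by
      have := Finset.sum_sdiff (f := x) (Finset.inter_subset_left (s₁ := S) (s₂ := S'))
      rwa [Finset.sdiff_inter_self_left] at this
    have hinter : ∑ m ∈ S' ∩ S, x m = ∑ m ∈ S ∩ S', x m := by rw [Finset.inter_comm]
    have hcardTS : ((T \ S).card : ℝ) = (L.card : ℝ) := by
      rw [hTS, hjLcard]
    rw [hcardTS, hsumT]
    have h1 : ((S' \ S).card : ℝ) = (t : ℝ) := by rw [htdef]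
    rw [h1]
    linarith [hP, hPexp, hLexp]
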